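/- Let α be a real number with cos(α/2) ≠ 0, and set q₁ = tan(α/2) and q₂ = sin(α). Let A(q) denote the 2×2 real matrix [[1,0],[q,1]] and let B denote the 2×2 real matrix [[0,−1],[1,0]]. Then the matrix product A(q₁)·B⁻¹·A(q₂)·B·A(q₁) equals the 2D rotation matrix [[cos α, −sin α],[sin α, cos α]]. -/

import Mathlib

/-- With `q₁ = tan(α/2)`, `q₂ = sin α`, shear matrices `A q = [[1,0],[q,1]]`
and `B = [[0,-1],[1,0]]`, the product `A(q₁)·B⁻¹·A(q₂)·B·A(q₁)` is the rotation by `α`. -/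
theorem garcia_product_eq_rotation (α : ℝ) (h : Real.cos (α / 2) ≠ 0)
    (q₁ q₂ : ℝ) (hq₁ : q₁ = Real.tan (α / 2)) (hq₂ : q₂ = Real.sin α)
    (A : ℝ → Matrix (Fin 2) (Fin 2) ℝ)
    (hA : ∀ q, A q = !![1, 0; q, 1])
    (B : Matrix (Fin 2) (Fin 2) ℝ)
    (hB : B = !![0, -1; 1, 0]) :
    A q₁ * B⁻¹ * A q₂ * B * A q₁ =
      !![Real.cos α, -Real.sin α; Real.sin α, Real.cos α] := by
  have hBinv : B⁻¹ = !![0, 1; -1, 0] := by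
    rw [hB]
    apply Matrix.inv_eq_left_inv
    ext i j
    fin_cases i <;> fin_cases j <;>
      simp [Matrix.mul_apply, Fin.sum_univ_two]
  have hs := Real.sin_two_mul (α / 2)
  rw [show 2 * (α / 2) = α by ring] at hs
  have hc := Real.cos_two_mul (α / 2)
  rw [show 2 * (α / 2) = α by ring] at hc
  have hpy := Real.sin_sq_add_cos_sq (α / 2)
  have ht : q₁ = Real.sin (α / 2) / Real.cos (α / 2) := by
    rw [hq₁, Real.tan_eq_sin_div_cos]
  rw [hA, hA, hBinv, hB]
  ext i j
  fin_cases i <;> fin_cases j <;>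
    · simp [Matrix.mul_apply, Fin.sum_univ_two, ht, hq₂, hs, hc] <;>
      field_simp <;>
      first
      | linear_combination (2 * Real.cos (α / 2)) * hpy
      | linear_combination (-2 * Real.cos (α / 2)) * hpy
      | linear_combination (2 * Real.sin (α / 2) * Real.cos (α / 2) ^ 2) * hpy
      | linear_combination (-2 * Real.sin (α / 2) * Real.cos (α / 2) ^ 2) * hpy
      | linear_combination (-2) * hpy
      | linear_combination (-2 * Real.sin (α / 2)) * hpy
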